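/- Let Γ be a finite simple graph and Λ an induced subgraph of Γ. The normalizer in A(Γ) of the subgroup ⟨Λ⟩ is the subgroup ⟨ Λ ∪ link(Λ) ⟩ generated by the vertices of Λ together with the vertices of Γ adjacent to every vertex of Λ. -/

import Mathlib

universe u

/-- The defining relators of the right-angled Artin group of a simple graph. -/
def raagRels {V : Type u} (Γ : SimpleGraph V) : Set (FreeGroup V) :=
  {r | ∃ u v : V, Γ.Adj u v ∧
    r = FreeGroup.of u * FreeGroup.of v * (FreeGroup.of u)⁻¹ * (FreeGroup.of v)⁻¹}

/-- The right-angled Artin group of a simple graph. -/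
abbrev RAAG {V : Type u} (Γ : SimpleGraph V) : Type u := PresentedGroup (raagRels Γ)

/-- The generator of `RAAG Γ` corresponding to a vertex. -/
def raagGen {V : Type u} (Γ : SimpleGraph V) (u : V) : RAAG Γ :=
  PresentedGroup.of (rels := raagRels Γ) u

/-- The link of a set of vertices: the vertices adjacent to every vertex of `S`. -/
def linkSet {V : Type u} (Γ : SimpleGraph V) (S : Set V) : Set V :=
  {v | ∀ u ∈ S, Γ.Adj v u}

namespace RAAGAux

variable {V : Type u} {W : Type u} (Γ : SimpleGraph V)

/-- Universal property: a map on vertices making adjacent pairs commute extends to a hom. -/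
def lift {G : Type*} [Group G] (f : V → G) (hf : ∀ u v, Γ.Adj u v → Commute (f u) (f v)) :
    RAAG Γ →* G :=
  PresentedGroup.toGroup (f := f) (by
    rintro r ⟨u, v, huv, rfl⟩
    simp only [map_mul, map_inv, FreeGroup.lift_apply_of]
    have h' := (hf u v huv).eq
    rw [h']
    group)

@[simp] lemma lift_gen {G : Type*} [Group G] (f : V → G)
    (hf : ∀ u v, Γ.Adj u v → Commute (f u) (f v)) (u : V) :
    lift Γ f hf (raagGen Γ u) = f u :=
  PresentedGroup.toGroup.of _

lemma adj_commute {u v : V} (h : Γ.Adj u v) : Commute (raagGen Γ u) (raagGen Γ v) := by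
  have : (PresentedGroup.mk (raagRels Γ))
      (FreeGroup.of u * FreeGroup.of v * (FreeGroup.of u)⁻¹ * (FreeGroup.of v)⁻¹) = 1 := by
    apply (QuotientGroup.eq_one_iff _).2
    exact Subgroup.subset_normalClosure ⟨u, v, h, rfl⟩
  simp only [map_mul, map_inv] at this
  have h' : raagGen Γ u * raagGen Γ v * (raagGen Γ u)⁻¹ * (raagGen Γ v)⁻¹ = 1 := this
  have := mul_eq_one_iff_eq_inv.mp h'
  unfold Commute SemiconjBy
  calc raagGen Γ u * raagGen Γ v
      = (raagGen Γ u * raagGen Γ v * (raagGen Γ u)⁻¹ * (raagGen Γ v)⁻¹) * (raagGen Γ v * raagGen Γ u) := by group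
    _ = raagGen Γ v * raagGen Γ u := by rw [h']; group

lemma closure_univ : Subgroup.closure (Set.range (raagGen Γ)) = ⊤ :=
  PresentedGroup.closure_range_of _

/-- hom ext -/
lemma hom_ext {G : Type*} [Group G] {f g : RAAG Γ →* G}
    (h : ∀ u, f (raagGen Γ u) = g (raagGen Γ u)) : f = g :=
  PresentedGroup.ext h

open Classical

variable (A : Set V)

/-- The retraction-type endomorphism killing generators outside `A`. -/
noncomputable def proj : RAAG Γ →* RAAG Γ :=
  lift Γ (fun v => if v ∈ A then raagGen Γ v else 1) (by
    intro u v huv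
    by_cases hu : u ∈ A <;> by_cases hv : v ∈ A <;>
      simp [hu, hv, adj_commute Γ huv, Commute.one_left, Commute.one_right])

@[simp] lemma proj_gen (u : V) :
    proj Γ A (raagGen Γ u) = if u ∈ A then raagGen Γ u else 1 := lift_gen _ _ _ _

lemma proj_mem (x : RAAG Γ) : proj Γ A x ∈ Subgroup.closure (raagGen Γ '' A) := by
  have hx : x ∈ Subgroup.closure (Set.range (raagGen Γ)) := by
    rw [closure_univ]; trivial
  induction hx using Subgroup.closure_induction with
  | mem y hy =>
      obtain ⟨u, rfl⟩ := hy
      rw [proj_gen]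
      split
      · exact Subgroup.subset_closure ⟨u, ‹_›, rfl⟩
      · exact Subgroup.one_mem _
  | one => rw [map_one]; exact Subgroup.one_mem _
  | mul a b _ _ ha hb => rw [map_mul]; exact Subgroup.mul_mem _ ha hb
  | inv a _ ha => rw [map_inv]; exact Subgroup.inv_mem _ ha

lemma proj_fix {x : RAAG Γ} (hx : x ∈ Subgroup.closure (raagGen Γ '' A)) :
    proj Γ A x = x := by
  induction hx using Subgroup.closure_induction with
  | mem y hy => obtain ⟨u, hu, rfl⟩ := hy; simp [hu]
  | one => simp
  | mul a b _ _ ha hb => rw [map_mul, ha, hb]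
  | inv a _ ha => rw [map_inv, ha]

lemma mem_closure_iff {x : RAAG Γ} :
    x ∈ Subgroup.closure (raagGen Γ '' A) ↔ proj Γ A x = x :=
  ⟨proj_fix Γ A, fun h => h ▸ proj_mem Γ A x⟩

end RAAGAux


open Monoid Monoid.PushoutI

namespace BrittonAux

variable {ι : Type*} {G : ι → Type*} {H : Type*} [∀ i, Group (G i)] [Group H]
  {φ : ∀ i, H →* G i}

def Red (φ : ∀ i, H →* G i) (l : List (Σ i, G i)) : Prop :=
  l.Chain' (fun a b => a.1 ≠ b.1) ∧ ∀ p ∈ l, p.2 ∉ (φ p.1).range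

def lprod (l : List (Σ i, G i)) : PushoutI φ :=
  (l.map fun p => of p.1 p.2).prod

@[simp] lemma lprod_nil : lprod ([] : List (Σ i, G i)) = (1 : PushoutI φ) := rfl

@[simp] lemma lprod_append (l₁ l₂ : List (Σ i, G i)) :
    lprod (φ := φ) (l₁ ++ l₂) = lprod l₁ * lprod l₂ := by
  simp [lprod]

@[simp] lemma lprod_cons (p : (Σ i, G i)) (l : List (Σ i, G i)) :
    lprod (φ := φ) (p :: l) = of p.1 p.2 * lprod l := by
  simp [lprod]

@[simp] lemma lprod_singleton (p : (Σ i, G i)) :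
    lprod (φ := φ) [p] = of p.1 p.2 := by simp [lprod]

def invRev (l : List (Σ i, G i)) : List (Σ i, G i) :=
  (l.reverse).map fun p => ⟨p.1, p.2⁻¹⟩

lemma invRev_append (l₁ l₂ : List (Σ i, G i)) :
    invRev (l₁ ++ l₂) = invRev l₂ ++ invRev l₁ := by
  simp [invRev]

lemma lprod_invRev (l : List (Σ i, G i)) :
    lprod (φ := φ) (invRev l) = (lprod l)⁻¹ := by
  induction l with
  | nil => simp [invRev]
  | cons p l ih =>
      have : invRev (p :: l) = invRev l ++ [⟨p.1, p.2⁻¹⟩] := by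
        simp [invRev]
      rw [this, lprod_append, ih]
      simp [mul_assoc, mul_inv_rev]

lemma red_invRev {l : List (Σ i, G i)} (hl : Red φ l) : Red φ (invRev l) := by
  obtain ⟨h1, h2⟩ := hl
  constructor
  · unfold List.Chain'; rw [invRev, List.isChain_map]
    exact (List.isChain_reverse.2 (by simpa [List.Chain', Function.flip_def, ne_comm] using h1))
  · rintro p hp
    rw [invRev, List.mem_map] at hp
    obtain ⟨q, hq, rfl⟩ := hp
    simpa using h2 q (List.mem_reverse.1 hq)

lemma red_prefix {l₁ l₂ : List (Σ i, G i)} (hl : Red φ (l₁ ++ l₂)) : Red φ l₁ :=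
  ⟨hl.1.prefix (l₁.prefix_append _), fun q hq => hl.2 q (List.mem_append_left _ hq)⟩

lemma ofCoprodI_word_prod (w : CoprodI.Word G) :
    ofCoprodI (φ := φ) w.prod = lprod w.toList := by
  simp only [CoprodI.Word.prod, lprod, ← List.map_map]
  rw [map_list_prod]
  simp [List.map_map, Function.comp_def]

variable (hφ : ∀ i, Function.Injective (φ i))
include hφ

/-- Britton: a nonempty reduced list has product outside the base group image. -/
lemma F0 {l : List (Σ i, G i)} (hl : Red φ l)
    (h : lprod (φ := φ) l ∈ (base φ).range) : l = [] := by
  have hred : Reduced φ (⟨l, fun p hp h1 => hl.2 p hp (h1 ▸ Subgroup.one_mem _), hl.1⟩ :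
      CoprodI.Word G) := fun p hp => hl.2 p hp
  have := hred.eq_empty_of_mem_range hφ (by rwa [ofCoprodI_word_prod])
  simpa [CoprodI.Word.empty] using congrArg CoprodI.Word.toList this

/-- A reduced list whose product is in a vertex group has length at most one. -/
lemma F2 {l : List (Σ i, G i)} (hl : Red φ l) {j : ι}
    (h : lprod (φ := φ) l ∈ (of j).range) : l.length ≤ 1 := by
  induction l using List.reverseRecOn with
  | nil => simp
  | append_singleton l' p ih =>
      obtain ⟨c, hc⟩ := h
      by_cases hcr : c ∈ (φ j).range
      · obtain ⟨b, rfl⟩ := hcr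
        have := F0 hφ hl (by rw [← hc, of_apply_eq_base]; exact ⟨b, rfl⟩)
        simp at this
      · have hl' : Red φ l' := red_prefix hl
        by_cases hij : p.1 = j
        · obtain ⟨i, gn⟩ := p
          subst hij
          have hstep : lprod (φ := φ) l' = of i (c * gn⁻¹) := by
            have : lprod (φ := φ) (l' ++ [⟨i, gn⟩]) = of i c := hc.symm
            rw [lprod_append, lprod_singleton] at this
            rw [map_mul, map_inv, ← this]
            group
          have hlen := ih hl' ⟨_, hstep.symm⟩
          match l', hlen with
          | [], _ => simp
          | [q], _ =>
              exfalso
              have hqj : q.1 ≠ i := by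
                have := hl.1
                unfold List.Chain' at this; rw [List.isChain_append] at this
                exact this.2.2 q (by simp) ⟨i, gn⟩ (by simp)
              have hbase : of (φ := φ) q.1 q.2 ∈ (base φ).range := by
                rw [← inf_of_range_eq_base_range hφ hqj]
                refine ⟨⟨q.2, rfl⟩, ⟨c * gn⁻¹, ?_⟩⟩
                rw [← hstep]; simp
              have := F0 hφ (red_prefix (l₂ := [⟨i, gn⟩]) hl) (by simpa using hbase)
              simp at this
        · exfalso
          have hred : Red φ ((l' ++ [p]) ++ [⟨j, c⁻¹⟩]) := by
            constructor
            · unfold List.Chain'; rw [List.isChain_append]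
              refine ⟨hl.1, List.isChain_singleton _, ?_⟩
              intro x hx y hy
              rw [List.getLast?_append, List.getLast?_singleton] at hx
              obtain rfl : p = x := by simpa using hx
              obtain rfl : (⟨j, c⁻¹⟩ : Σ i, G i) = y := by simpa using hy
              exact hij
            · intro q hq
              rcases List.mem_append.1 hq with hq | hq
              · exact hl.2 q hq
              · simp only [List.mem_singleton] at hq
                subst hq
                simpa using hcr
          have h1 : lprod (φ := φ) ((l' ++ [p]) ++ [⟨j, c⁻¹⟩]) = 1 := by
            rw [lprod_append, ← hc, lprod_singleton]
            simp
          have := F0 hφ hred (by rw [h1]; exact Subgroup.one_mem _)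
          simp at this

/-- The key conjugation lemma: if `a ∈ G i₀` is not conjugate into the base subgroup
within `G i₀`, and a reduced list conjugates `of i₀ a` into `(of i₀).range`, then
the list is trivial or a single `i₀`-letter. -/
lemma F1 {i₀ : ι} {l : List (Σ i, G i)} (hl : Red φ l) :
    ∀ (a : G i₀), (∀ x : G i₀, x * a * x⁻¹ ∉ (φ i₀).range) →
    lprod l * of i₀ a * (lprod (φ := φ) l)⁻¹ ∈ (of i₀).range →
    l = [] ∨ ∃ g : G i₀, l = [⟨i₀, g⟩] := by
  induction l using List.reverseRecOn with
  | nil => intro a _ _; exact Or.inl rfl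
  | append_singleton l' p ih =>
      intro a ha h
      obtain ⟨i, gn⟩ := p
      by_cases hii : i = i₀
      · subst hii
        have hl' : Red φ l' := red_prefix hl
        have ha₂ : ∀ x : G i, x * (gn * a * gn⁻¹) * x⁻¹ ∉ (φ i).range := by
          intro x hx
          refine ha (x * gn) ?_
          convert hx using 1
          group
        have h₂ : lprod l' * of i (gn * a * gn⁻¹) * (lprod (φ := φ) l')⁻¹ ∈ (of i).range := by
          convert h using 1
          rw [lprod_append, lprod_singleton]
          simp only [map_mul, map_inv]
          group
        rcases ih hl' _ ha₂ h₂ with rfl | ⟨g, rfl⟩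
        · exact Or.inr ⟨gn, rfl⟩
        · exfalso
          have := hl.1
          unfold List.Chain' at this; rw [List.isChain_append] at this
          exact this.2.2 ⟨i, g⟩ (by simp) ⟨i, gn⟩ (by simp) rfl
      · exfalso
        set l := l' ++ [⟨i, gn⟩] with hldef
        have hW : Red φ (l ++ ⟨i₀, a⟩ :: invRev l) := by
          constructor
          · unfold List.Chain'; rw [List.isChain_append]
            refine ⟨hl.1, ?_, ?_⟩
            · refine List.IsChain.cons (red_invRev hl).1 ?_
              intro y hy
              have : invRev l = ⟨i, gn⁻¹⟩ :: invRev l' := by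
                rw [hldef, invRev_append]; rfl
              rw [this] at hy
              simp only [List.head?_cons, Option.mem_some_iff] at hy
              subst hy
              exact Ne.symm hii
            · intro x hx y hy
              rw [hldef, List.getLast?_append, List.getLast?_singleton] at hx
              obtain rfl : (⟨i, gn⟩ : Σ i, G i) = x := by simpa using hx
              obtain rfl : (⟨i₀, a⟩ : Σ i, G i) = y := by simpa using hy
              exact hii
          · intro q hq
            rcases List.mem_append.1 hq with hq | hq
            · exact hl.2 q hq
            · rcases List.mem_cons.1 hq with rfl | hq
              · intro hmem
                refine ha 1 ?_
                simpa using hmem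
              · exact (red_invRev hl).2 q hq
        have hWprod : lprod (φ := φ) (l ++ ⟨i₀, a⟩ :: invRev l) =
            lprod l * of i₀ a * (lprod (φ := φ) l)⁻¹ := by
          rw [lprod_append, lprod_cons, lprod_invRev, mul_assoc]
        have hlen := F2 hφ hW (by rw [hWprod]; exact h)
        rw [List.length_append, List.length_cons] at hlen
        have hll : l.length = l'.length + 1 := by simp [hldef]
        omega

/-- Main Britton-type lemma: an element conjugating `of i₀ a` into `(of i₀).range`,
where `a` is not conjugate into the base subgroup, lies in `(of i₀).range`. -/
lemma conj_mem_range {i₀ : ι} {a : G i₀}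
    (ha : ∀ x : G i₀, x * a * x⁻¹ ∉ (φ i₀).range)
    {g : PushoutI φ} (h : g * of i₀ a * g⁻¹ ∈ (of i₀).range) :
    g ∈ (of i₀).range := by
  classical
  obtain ⟨d⟩ := NormalWord.transversal_nonempty φ hφ
  set w : NormalWord d := g • NormalWord.empty with hwdef
  have hw : w.prod = g := by rw [NormalWord.prod_smul, NormalWord.prod_empty, mul_one]
  have hred : Red φ w.toList := by
    refine ⟨w.chain_ne, ?_⟩
    rintro ⟨i, x⟩ hp hxr
    obtain ⟨y, hy⟩ := hxr
    have hset : x ∈ d.set i := w.normalized i x hp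
    have hinj := (d.compl i).1 (a₁ := ⟨⟨x, ⟨y, hy⟩⟩, ⟨1, d.one_mem i⟩⟩)
      (a₂ := ⟨⟨1, Subgroup.one_mem _⟩, ⟨x, hset⟩⟩) (by simp)
    have h1 : x = 1 := by
      have := congrArg (fun z => (z.1 : G i)) hinj
      simpa using this
    exact w.ne_one ⟨i, x⟩ hp h1
  have hdecomp : g = base φ w.head * lprod w.toList := by
    rw [← hw, NormalWord.prod, ofCoprodI_word_prod]
  have hbase : base φ w.head ∈ (of (φ := φ) i₀).range :=
    ⟨φ i₀ w.head, of_apply_eq_base φ i₀ w.head⟩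
  have hconj : lprod w.toList * of i₀ a * (lprod (φ := φ) w.toList)⁻¹ ∈ (of i₀).range := by
    have : lprod (φ := φ) w.toList * of i₀ a * (lprod (φ := φ) w.toList)⁻¹ =
        (base φ w.head)⁻¹ * (g * of i₀ a * g⁻¹) * (base φ w.head) := by
      rw [hdecomp]; group
    rw [this]
    exact Subgroup.mul_mem _ (Subgroup.mul_mem _ (Subgroup.inv_mem _ hbase) h) hbase
  rcases F1 hφ hred a ha hconj with hnil | ⟨g₀, hsingle⟩
  · rw [hdecomp, hnil, lprod_nil, mul_one]; exact hbase
  · rw [hdecomp, hsingle, lprod_singleton]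
    exact Subgroup.mul_mem _ hbase ⟨g₀, rfl⟩

end BrittonAux

open Monoid Monoid.PushoutI

namespace RAAGAux

open Classical

variable {V : Type u} (Γ : SimpleGraph V)

/-- Inclusion of the RAAG of an induced subgraph into the ambient RAAG. -/
noncomputable def incl (A : Set V) : RAAG (Γ.induce A) →* RAAG Γ :=
  lift (Γ.induce A) (fun a => raagGen Γ ↑a) (fun _ _ hab => adj_commute Γ hab)

@[simp] lemma incl_gen (A : Set V) (a : ↥A) :
    incl Γ A (raagGen (Γ.induce A) a) = raagGen Γ ↑a := lift_gen _ _ _ _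

/-- Restriction (retraction) onto the RAAG of an induced subgraph. -/
noncomputable def restr (A : Set V) : RAAG Γ →* RAAG (Γ.induce A) :=
  lift Γ (fun u => if h : u ∈ A then raagGen (Γ.induce A) ⟨u, h⟩ else 1) (by
    intro u w huw
    by_cases hu : u ∈ A <;> by_cases hw : w ∈ A <;>
      simp only [dif_pos, dif_neg, hu, hw]
    · exact adj_commute (Γ.induce A) (u := ⟨u, hu⟩) (v := ⟨w, hw⟩) huw
    all_goals first | exact Commute.one_right _ | exact Commute.one_left _)

@[simp] lemma restr_gen (A : Set V) (u : V) :
    restr Γ A (raagGen Γ u) =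
      if h : u ∈ A then raagGen (Γ.induce A) ⟨u, h⟩ else 1 := lift_gen _ _ _ _

lemma restr_incl (A : Set V) (x : RAAG (Γ.induce A)) : restr Γ A (incl Γ A x) = x := by
  have : (restr Γ A).comp (incl Γ A) = MonoidHom.id _ := by
    apply hom_ext
    intro u
    simp
  exact DFunLike.congr_fun this x

lemma incl_injective (A : Set V) : Function.Injective (incl Γ A) :=
  Function.LeftInverse.injective (restr_incl Γ A)

/-- Inclusion between RAAGs of nested induced subgraphs. -/
noncomputable def inclN {A B : Set V} (h : A ⊆ B) :
    RAAG (Γ.induce A) →* RAAG (Γ.induce B) :=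
  lift (Γ.induce A) (fun a => raagGen (Γ.induce B) ⟨↑a, h a.2⟩)
    (fun _ _ hab => adj_commute (Γ.induce B) hab)

@[simp] lemma inclN_gen {A B : Set V} (h : A ⊆ B) (a : ↥A) :
    inclN Γ h (raagGen (Γ.induce A) a) = raagGen (Γ.induce B) ⟨↑a, h a.2⟩ := lift_gen _ _ _ _

lemma incl_inclN {A B : Set V} (h : A ⊆ B) (x : RAAG (Γ.induce A)) :
    incl Γ B (inclN Γ h x) = incl Γ A x := by
  have : (incl Γ B).comp (inclN Γ h) = incl Γ A := by
    apply hom_ext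
    intro u
    simp
  exact DFunLike.congr_fun this x

lemma inclN_injective {A B : Set V} (h : A ⊆ B) : Function.Injective (inclN Γ h) := by
  intro x y hxy
  apply incl_injective Γ A
  rw [← incl_inclN Γ h, ← incl_inclN Γ h, hxy]

lemma proj_incl_comm {A : Set V} (T : Set V) (T' : Set ↥A)
    (hT : ∀ u : ↥A, u ∈ T' ↔ ↑u ∈ T) (x : RAAG (Γ.induce A)) :
    incl Γ A (proj (Γ.induce A) T' x) = proj Γ T (incl Γ A x) := by
  have : (incl Γ A).comp (proj (Γ.induce A) T') = (proj Γ T).comp (incl Γ A) := by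
    apply hom_ext
    intro u
    by_cases hu : u ∈ T'
    · simp [hu, (hT u).1 hu]
    · have h2 : ↑u ∉ T := fun h => hu ((hT u).2 h)
      simp [hu, h2]
  exact DFunLike.congr_fun this x

section Decomp

variable (v : V)

def Av (v : V) : Set V := {u | u ≠ v}

def stv : Set V := insert v (Γ.neighborSet v)

def lkv : Set V := Γ.neighborSet v

lemma lk_sub_Av : lkv Γ v ⊆ Av v := fun u hu => (Γ.ne_of_adj hu).symm

lemma lk_sub_stv : lkv Γ v ⊆ stv Γ v := fun u hu => Set.mem_insert_of_mem _ hu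

abbrev Gfam (b : Bool) : Type u :=
  if b then RAAG (Γ.induce (stv Γ v)) else RAAG (Γ.induce (Av v))

instance : ∀ b, Group (Gfam Γ v b) := fun b => by
  cases b <;> (dsimp [Gfam]; infer_instance)

noncomputable def φf : ∀ b, RAAG (Γ.induce (lkv Γ v)) →* Gfam Γ v b
  | false => inclN Γ (lk_sub_Av Γ v)
  | true => inclN Γ (lk_sub_stv Γ v)

lemma φf_injective : ∀ b, Function.Injective (φf Γ v b)
  | false => inclN_injective Γ (lk_sub_Av Γ v)
  | true => inclN_injective Γ (lk_sub_stv Γ v)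

/-- The factor maps from the pushout components back to the RAAG. -/
noncomputable def Ψf : ∀ b, Gfam Γ v b →* RAAG Γ
  | false => incl Γ (Av v)
  | true => incl Γ (stv Γ v)

/-- The map from the pushout back to the RAAG. -/
noncomputable def Ψ : PushoutI (φf Γ v) →* RAAG Γ :=
  PushoutI.lift (Ψf Γ v) (incl Γ (lkv Γ v))
    (by
      intro b
      apply hom_ext
      intro u
      cases b
      · show incl Γ (Av v) (inclN Γ (lk_sub_Av Γ v) (raagGen _ u)) =
          incl Γ (lkv Γ v) (raagGen _ u)
        rw [inclN_gen, incl_gen, incl_gen]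
      · show incl Γ (stv Γ v) (inclN Γ (lk_sub_stv Γ v) (raagGen _ u)) =
          incl Γ (lkv Γ v) (raagGen _ u)
        rw [inclN_gen, incl_gen, incl_gen])

@[simp] lemma Ψ_of_false (x : RAAG (Γ.induce (Av v))) :
    Ψ Γ v (PushoutI.of (φ := φf Γ v) false x) = incl Γ (Av v) x := by
  rw [Ψ, PushoutI.lift_of]
  rfl

@[simp] lemma Ψ_of_true (x : RAAG (Γ.induce (stv Γ v))) :
    Ψ Γ v (PushoutI.of (φ := φf Γ v) true x) = incl Γ (stv Γ v) x := by
  rw [Ψ, PushoutI.lift_of]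
  rfl

lemma of_false_eq_of_true {w : V} (hw : w ∈ lkv Γ v) :
    PushoutI.of (φ := φf Γ v) false (raagGen (Γ.induce (Av v)) ⟨w, lk_sub_Av Γ v hw⟩) =
    PushoutI.of (φ := φf Γ v) true (raagGen (Γ.induce (stv Γ v)) ⟨w, lk_sub_stv Γ v hw⟩) := by
  have h1 := of_apply_eq_base (φ := φf Γ v) false (raagGen (Γ.induce (lkv Γ v)) ⟨w, hw⟩)
  have h2 := of_apply_eq_base (φ := φf Γ v) true (raagGen (Γ.induce (lkv Γ v)) ⟨w, hw⟩)
  have e1 : φf Γ v false (raagGen (Γ.induce (lkv Γ v)) ⟨w, hw⟩) =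
      raagGen (Γ.induce (Av v)) ⟨w, lk_sub_Av Γ v hw⟩ := inclN_gen Γ _ _
  have e2 : φf Γ v true (raagGen (Γ.induce (lkv Γ v)) ⟨w, hw⟩) =
      raagGen (Γ.induce (stv Γ v)) ⟨w, lk_sub_stv Γ v hw⟩ := inclN_gen Γ _ _
  rw [e1] at h1
  rw [e2] at h2
  rw [h1, h2]

/-- The map from the RAAG to the pushout. -/
noncomputable def Φ : RAAG Γ →* PushoutI (φf Γ v) :=
  lift Γ
    (fun u => if h : u = v
      then PushoutI.of (φ := φf Γ v) true
        (raagGen (Γ.induce (stv Γ v)) ⟨v, Set.mem_insert _ _⟩)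
      else PushoutI.of (φ := φf Γ v) false (raagGen (Γ.induce (Av v)) ⟨u, h⟩))
    (by
      intro u w huw
      by_cases hu : u = v <;> by_cases hw : w = v
      · rw [hu, hw] at huw
        exact absurd huw (Γ.loopless.irrefl v)
      · simp only [dif_pos hu, dif_neg hw]
        have hvw : Γ.Adj v w := hu ▸ huw
        have hwlk : w ∈ lkv Γ v := hvw
        rw [of_false_eq_of_true Γ v hwlk]
        exact (adj_commute (Γ.induce (stv Γ v))
          (u := ⟨v, Set.mem_insert _ _⟩) (v := ⟨w, lk_sub_stv Γ v hwlk⟩) hvw).map _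
      · simp only [dif_pos hw, dif_neg hu]
        have hvu : Γ.Adj v u := hw ▸ huw.symm
        have hulk : u ∈ lkv Γ v := hvu
        rw [of_false_eq_of_true Γ v hulk]
        exact ((adj_commute (Γ.induce (stv Γ v))
          (u := ⟨v, Set.mem_insert _ _⟩) (v := ⟨u, lk_sub_stv Γ v hulk⟩) hvu).map _).symm
      · simp only [dif_neg hu, dif_neg hw]
        exact (adj_commute (Γ.induce (Av v)) (u := ⟨u, hu⟩) (v := ⟨w, hw⟩) huw).map _)

@[simp] lemma Φ_gen (u : V) :
    Φ Γ v (raagGen Γ u) = if h : u = v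
      then PushoutI.of (φ := φf Γ v) true
        (raagGen (Γ.induce (stv Γ v)) ⟨v, Set.mem_insert _ _⟩)
      else PushoutI.of (φ := φf Γ v) false (raagGen (Γ.induce (Av v)) ⟨u, h⟩) :=
  lift_gen _ _ _ _

lemma Ψ_Φ (x : RAAG Γ) : Ψ Γ v (Φ Γ v x) = x := by
  have : (Ψ Γ v).comp (Φ Γ v) = MonoidHom.id _ := by
    apply hom_ext
    intro u
    by_cases hu : u = v
    · subst hu; simp
    · simp [hu]
  exact DFunLike.congr_fun this x

end Decomp

end RAAGAux

namespace RAAGAux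

open Classical

variable {V : Type u}

/-- The core triviality lemma: an element commuting with all generators from `S` and killed
by the retraction onto `S ∪ link S` is trivial. Induction on the number of vertices. -/
lemma Tcore : ∀ (n : ℕ) {V : Type u} [Fintype V] (Γ : SimpleGraph V),
    Fintype.card V ≤ n → ∀ (S : Set V) (k : RAAG Γ),
    (∀ s ∈ S, Commute k (raagGen Γ s)) →
    proj Γ (S ∪ linkSet Γ S) k = 1 → k = 1 := by
  intro n
  induction n with
  | zero =>
      intro V _ Γ hcard S k _ hk
      have hall : S ∪ linkSet Γ S = Set.univ := by
        have : IsEmpty V := Fintype.card_eq_zero_iff.1 (by omega)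
        exact Set.eq_univ_of_forall fun u => (this.false u).elim
      have htop : Subgroup.closure (raagGen Γ '' (S ∪ linkSet Γ S)) = ⊤ := by
        rw [hall, Set.image_univ]; exact closure_univ Γ
      have := proj_fix Γ (S ∪ linkSet Γ S) (x := k) (htop ▸ Subgroup.mem_top k)
      rw [← this, hk]
  | succ m ih =>
      intro V _ Γ hcard S k hc hk
      by_cases hall : S ∪ linkSet Γ S = Set.univ
      · have htop : Subgroup.closure (raagGen Γ '' (S ∪ linkSet Γ S)) = ⊤ := by
          rw [hall, Set.image_univ]; exact closure_univ Γ
        have := proj_fix Γ (S ∪ linkSet Γ S) (x := k) (htop ▸ Subgroup.mem_top k)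
        rw [← this, hk]
      · obtain ⟨v, hv⟩ := (Set.ne_univ_iff_exists_notMem _).1 hall
        have hvS : v ∉ S := fun h => hv (Or.inl h)
        have hvlk : v ∉ linkSet Γ S := fun h => hv (Or.inr h)
        obtain ⟨s₀, hs₀S, hnadj⟩ : ∃ s₀ ∈ S, ¬ Γ.Adj v s₀ := by
          by_contra hcon
          push_neg at hcon
          exact hvlk hcon
        have hs₀v : s₀ ≠ v := fun h => hvS (h ▸ hs₀S)
        -- the Britton argument in the pushout decomposition at v
        set a : RAAG (Γ.induce (Av v)) := raagGen (Γ.induce (Av v)) ⟨s₀, hs₀v⟩ with ha_def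
        -- a is not conjugate into the image of the link subgroup
        have ha : ∀ x : RAAG (Γ.induce (Av v)),
            x * a * x⁻¹ ∉ (φf Γ v false).range := by
          set χ : RAAG (Γ.induce (Av v)) →* Multiplicative ℤ :=
            lift (Γ.induce (Av v))
              (fun u => if (u : V) = s₀ then Multiplicative.ofAdd 1 else 1)
              (fun _ _ _ => Commute.all _ _) with hχ_def
          have hχa : χ a = Multiplicative.ofAdd 1 := by
            rw [ha_def, hχ_def, lift_gen]
            simp
          rintro x ⟨c, hc'⟩
          have hrange : χ (φf Γ v false c) = 1 := by
            have : (χ.comp (φf Γ v false)) = 1 := by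
              apply hom_ext
              intro w
              have hwne : (w : V) ≠ s₀ := by
                intro h
                exact hnadj (h ▸ w.2)
              show χ ((inclN Γ (lk_sub_Av Γ v)) (raagGen _ w)) = 1
              rw [inclN_gen, hχ_def, lift_gen]
              simp [hwne]
            calc χ (φf Γ v false c) = (χ.comp (φf Γ v false)) c := rfl
              _ = 1 := by rw [this]; rfl
          have : χ (x * a * x⁻¹) = Multiplicative.ofAdd 1 := by
            rw [map_mul, map_mul, map_inv, mul_comm (χ x) (χ a), mul_assoc,
              mul_inv_cancel, mul_one, hχa]
          rw [← hc', hrange] at this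
          exact absurd this (by decide)
        -- k conjugates `of false a` trivially
        have hcs₀ : k * raagGen Γ s₀ * k⁻¹ = raagGen Γ s₀ := by
          rw [(hc s₀ hs₀S).eq]
          group
        have hΦs₀ : Φ Γ v (raagGen Γ s₀) = PushoutI.of (φ := φf Γ v) false a := by
          rw [Φ_gen, dif_neg hs₀v]
        have hconj : Φ Γ v k * PushoutI.of (φ := φf Γ v) false a * (Φ Γ v k)⁻¹ ∈
            (PushoutI.of (φ := φf Γ v) false).range := by
          rw [← hΦs₀, ← map_inv, ← map_mul, ← map_mul, hcs₀, hΦs₀]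
          exact ⟨a, rfl⟩
        obtain ⟨k₀, hk₀⟩ := BrittonAux.conj_mem_range (φ := φf Γ v)
          (φf_injective Γ v) (i₀ := false) (a := a) ha hconj
        have hkk : k = incl Γ (Av v) k₀ := by
          rw [← Ψ_Φ Γ v k, ← hk₀, Ψ_of_false]
        -- transfer hypotheses to the smaller graph
        set S' : Set ↥(Av v) := {u : ↥(Av v) | (u : V) ∈ S} with hS'_def
        have hT : ∀ u : ↥(Av v),
            (u ∈ S' ∪ linkSet (Γ.induce (Av v)) S') ↔ (u : V) ∈ S ∪ linkSet Γ S := by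
          intro u
          constructor
          · rintro (h | h)
            · exact Or.inl h
            · refine Or.inr fun w hw => ?_
              have hwv : w ≠ v := fun he => hvS (he ▸ hw)
              exact h ⟨w, hwv⟩ hw
          · rintro (h | h)
            · exact Or.inl h
            · exact Or.inr fun w hw => h (w : V) hw
        have hc' : ∀ s' ∈ S', Commute k₀ (raagGen (Γ.induce (Av v)) s') := by
          intro s' hs'
          have := (hc (s' : V) hs').eq
          apply incl_injective Γ (Av v)
          rw [map_mul, map_mul, incl_gen, ← hkk]
          exact this
        have hπ' : proj (Γ.induce (Av v)) (S' ∪ linkSet (Γ.induce (Av v)) S') k₀ = 1 := by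
          apply incl_injective Γ (Av v)
          rw [proj_incl_comm Γ _ _ hT, ← hkk, hk, map_one]
        have hcard' : Fintype.card ↥(Av v) ≤ m := by
          have hlt : Fintype.card ↥(Av v) < Fintype.card V := by
            apply Fintype.card_subtype_lt (x := v)
            simp [Av]
          omega
        have := ih (Γ.induce (Av v)) hcard' S' k₀ hc' hπ'
        rw [hkk, this, map_one]

end RAAGAux


open RAAGAux

/-- The normaliser of `⟨Λ⟩` in `A(Γ)` is `⟨Λ ∪ link(Λ)⟩`. -/
theorem normalizer_vertex_subgroup {V : Type u} [Fintype V] (Γ : SimpleGraph V)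
    (S : Set V) :
    Subgroup.normalizer ((Subgroup.closure (raagGen Γ '' S) : Subgroup (RAAG Γ)) : Set (RAAG Γ)) =
      Subgroup.closure (raagGen Γ '' (S ∪ linkSet Γ S)) := by
  apply le_antisymm
  · -- hard direction
    intro g hg
    have hπSg : proj Γ S g ∈ Subgroup.closure (raagGen Γ '' S) := proj_mem Γ S g
    set h := g * (proj Γ S g)⁻¹ with hh_def
    have hSN : Subgroup.closure (raagGen Γ '' S) ≤
        Subgroup.normalizer ((Subgroup.closure (raagGen Γ '' S) : Subgroup (RAAG Γ)) : Set (RAAG Γ)) := Subgroup.le_normalizer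
    have hhN : h ∈ Subgroup.normalizer ((Subgroup.closure (raagGen Γ '' S) : Subgroup (RAAG Γ)) : Set (RAAG Γ)) :=
      Subgroup.mul_mem _ hg (Subgroup.inv_mem _ (hSN hπSg))
    have hprojh : proj Γ S h = 1 := by
      rw [hh_def, map_mul, map_inv, proj_fix Γ S hπSg, mul_inv_cancel]
    -- h centralizes the generators of S
    have hcent : ∀ s ∈ S, h * raagGen Γ s * h⁻¹ = raagGen Γ s := by
      intro s hs
      have h1 : h * raagGen Γ s * h⁻¹ ∈ Subgroup.closure (raagGen Γ '' S) :=
        (Subgroup.mem_normalizer_iff.1 hhN (raagGen Γ s)).1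
          (Subgroup.subset_closure ⟨s, hs, rfl⟩)
      have h2 : proj Γ S (h * raagGen Γ s * h⁻¹) = raagGen Γ s := by
        rw [map_mul, map_mul, map_inv, hprojh, proj_gen, if_pos hs]
        simp
      rw [← proj_fix Γ S h1, h2]
    set T := S ∪ linkSet Γ S with hT_def
    set pT := proj Γ T h with hpT_def
    set k := h * pT⁻¹ with hk_def
    have hpT_mem : pT ∈ Subgroup.closure (raagGen Γ '' T) := proj_mem Γ T h
    have hc : ∀ s ∈ S, Commute k (raagGen Γ s) := by
      intro s hs
      have hsT : s ∈ T := Set.mem_union_left _ hs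
      have hτ : pT * raagGen Γ s * pT⁻¹ = raagGen Γ s := by
        have := congrArg (proj Γ T) (hcent s hs)
        rwa [map_mul, map_mul, map_inv, proj_gen, if_pos hsT] at this
      have hτ' : pT⁻¹ * raagGen Γ s * pT = raagGen Γ s := by
        calc pT⁻¹ * raagGen Γ s * pT
            = pT⁻¹ * (pT * raagGen Γ s * pT⁻¹) * pT := by rw [hτ]
          _ = raagGen Γ s := by group
      have hconj : k * raagGen Γ s * k⁻¹ = raagGen Γ s := by
        rw [hk_def]
        have expand : h * pT⁻¹ * raagGen Γ s * (h * pT⁻¹)⁻¹ =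
            h * (pT⁻¹ * raagGen Γ s * pT) * h⁻¹ := by group
        rw [expand, hτ', hcent s hs]
      show k * raagGen Γ s = raagGen Γ s * k
      calc k * raagGen Γ s = (k * raagGen Γ s * k⁻¹) * k := by group
        _ = raagGen Γ s * k := by rw [hconj]
    have hπk : proj Γ T k = 1 := by
      rw [hk_def, map_mul, map_inv, proj_fix Γ T hpT_mem, mul_inv_cancel]
    have hk1 : k = 1 := Tcore (Fintype.card V) Γ le_rfl S k hc hπk
    have hhT : h = pT := by
      have h6 : h * pT⁻¹ = 1 := hk1
      rwa [mul_inv_eq_one] at h6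
    have hgT : g = h * proj Γ S g := by rw [hh_def]; group
    rw [hgT, hhT]
    refine Subgroup.mul_mem _ hpT_mem ?_
    refine Subgroup.closure_mono ?_ hπSg
    exact Set.image_mono Set.subset_union_left
  · -- easy direction
    rw [Subgroup.closure_le]
    rintro x ⟨u, hu, rfl⟩
    rcases hu with hu | hu
    · exact Subgroup.le_normalizer (Subgroup.subset_closure ⟨u, hu, rfl⟩)
    · have hcomm : ∀ x ∈ Subgroup.closure (raagGen Γ '' S), Commute (raagGen Γ u) x := by
        intro x hx
        induction hx using Subgroup.closure_induction with
        | mem y hy =>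
            obtain ⟨s, hs, rfl⟩ := hy
            exact adj_commute Γ (hu s hs)
        | one => exact Commute.one_right _
        | mul a b _ _ ha hb => exact ha.mul_right hb
        | inv a _ ha => exact ha.inv_right
      rw [SetLike.mem_coe, Subgroup.mem_normalizer_iff]
      intro n
      constructor
      · intro hn
        rw [(hcomm n hn).eq]
        simpa using hn
      · intro hn
        have hcn := (hcomm _ hn).eq
        have h3 : raagGen Γ u * (raagGen Γ u * n * (raagGen Γ u)⁻¹) = raagGen Γ u * n := by
          rw [hcn]; group
        have h4 := mul_left_cancel h3
        rw [← h4]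
        exact hn
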